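/- For all integers n ≥ 2 and H ≥ 2 and all n-tuples u_1,…,u_H, u_∞ of positive integers, there exist finite subsets A_1,…,A_n of the integers such that for every h ∈ {1,…,H} and all indices i, j ∈ {1,…,n}, |hA_i| ≤ |hA_j| if and only if (u_h)_i ≤ (u_h)_j, and for every integer h > H and all indices i, j ∈ {1,…,n}, |hA_i| ≤ |hA_j| if and only if (u_∞)_i ≤ (u_∞)_j. -/

import Mathlib

/-- The `h`-fold sumset of a finite set `A` of integers:
`hA = {a₁ + ⋯ + a_h : aᵢ ∈ A}`. -/
def finSumset (h : ℕ) (A : Finset ℤ) : Finset ℤ :=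
  (Fintype.piFinset fun _ : Fin h => A).image fun f => ∑ i, f i

open Finset Pointwise

lemma finSumset_one (A : Finset ℤ) : finSumset 1 A = A := by
  ext x
  simp only [finSumset, Finset.mem_image, Fintype.mem_piFinset]
  constructor
  · rintro ⟨f, hf, rfl⟩
    simpa using hf 0
  · intro hx
    exact ⟨fun _ => x, fun _ => hx, by simp⟩

lemma finSumset_succ (h : ℕ) (A : Finset ℤ) :
    finSumset (h+1) A = finSumset h A + A := by
  ext x
  simp only [finSumset, Finset.mem_image, Fintype.mem_piFinset, Finset.mem_add]
  constructor
  · rintro ⟨f, hf, rfl⟩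
    refine ⟨∑ i : Fin h, f i.castSucc, ⟨fun i => f i.castSucc, fun i => hf _, rfl⟩,
      f (Fin.last h), hf _, (Fin.sum_univ_castSucc f).symm⟩
  · rintro ⟨y, ⟨g, hg, rfl⟩, a, ha, rfl⟩
    refine ⟨Fin.snoc g a, fun i => ?_, ?_⟩
    · induction i using Fin.lastCases with
      | last => simpa using ha
      | cast i => simpa using hg i
    · rw [Fin.sum_univ_castSucc]
      simp

structure Ctx where
  N : ℕ
  P : ℤ
  p : ℤ
  Q : ℤ
  c : ℤ
  β : ℕ → ℤ
  hN : 1 ≤ N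
  hp : 0 < p
  hP0 : 0 < P
  hb1 : β 1 = P + p
  hdec : ∀ j k : ℕ, 1 ≤ j → j ≤ k → k ≤ N → β k ≤ β j
  hpos : ∀ j : ℕ, 1 ≤ j → j ≤ N → 0 < β j
  hPP : ∀ j k : ℕ, 2 ≤ j → j ≤ N → 2 ≤ k → k ≤ N → β j + β k ≤ P
  hQ : (N:ℤ)*(P+p) < Q
  hc : c = ((N:ℤ)+1)*Q

namespace Ctx

variable (Γ : Ctx)

def F (t h : ℕ) : ℤ := ((t:ℤ)-1)*(Γ.P+Γ.p) + Γ.β (max (t+1-h) 1)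

noncomputable def T (h : ℕ) : Finset ℤ :=
  insert 0 (((Finset.Icc 1 Γ.N).biUnion fun t =>
    Finset.Icc ((t:ℤ)*Γ.Q) ((t:ℤ)*Γ.Q + Γ.F t h)) ∪ Finset.Icc Γ.c (2*Γ.c*h))

lemma hPp : 0 < Γ.P + Γ.p := by linarith [Γ.hp, Γ.hP0]

lemma hQ0 : 0 < Γ.Q := by
  have h1 : (1:ℤ) ≤ (Γ.N:ℤ) := by exact_mod_cast Γ.hN
  nlinarith [Γ.hQ, Γ.hPp]

lemma hc0 : 0 < Γ.c := by
  have h1 : (1:ℤ) ≤ (Γ.N:ℤ) := by exact_mod_cast Γ.hN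
  rw [Γ.hc]; nlinarith [Γ.hQ0]

lemma beta_le_b1 (j : ℕ) (h1 : 1 ≤ j) (hN : j ≤ Γ.N) : Γ.β j ≤ Γ.P + Γ.p := by
  rw [← Γ.hb1]; exact Γ.hdec 1 j le_rfl h1 hN

lemma beta_pos' (j : ℕ) (h1 : 1 ≤ j) (hN : j ≤ Γ.N) : 0 < Γ.β j := Γ.hpos j h1 hN


lemma F_nonneg (t h : ℕ) (ht1 : 1 ≤ t) (htN : t ≤ Γ.N) (hh : 1 ≤ h) : 0 ≤ Γ.F t h := by
  have h1 : (1:ℤ) ≤ (t:ℤ) := by exact_mod_cast ht1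
  have hβ : 0 < Γ.β (max (t+1-h) 1) := Γ.hpos _ (by omega) (by omega)
  have := Γ.hPp
  unfold F; nlinarith

lemma F_le (t h : ℕ) (ht1 : 1 ≤ t) (htN : t ≤ Γ.N) (hh : 1 ≤ h) :
    Γ.F t h ≤ (t:ℤ)*(Γ.P+Γ.p) := by
  have hβ : Γ.β (max (t+1-h) 1) ≤ Γ.P + Γ.p := Γ.beta_le_b1 _ (by omega) (by omega)
  unfold F; nlinarith

lemma F_lt_Q (t h : ℕ) (ht1 : 1 ≤ t) (htN : t ≤ Γ.N) (hh : 1 ≤ h) : Γ.F t h < Γ.Q := by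
  have h1 : (t:ℤ) ≤ (Γ.N:ℤ) := by exact_mod_cast htN
  have h2 := Γ.F_le t h ht1 htN hh
  have h3 : (t:ℤ)*(Γ.P+Γ.p) ≤ (Γ.N:ℤ)*(Γ.P+Γ.p) :=
    mul_le_mul_of_nonneg_right h1 Γ.hPp.le
  linarith [Γ.hQ]

lemma F_mono (t h h' : ℕ) (hh1 : 1 ≤ h) (hh : h ≤ h') (ht1 : 1 ≤ t) (htN : t ≤ Γ.N) :
    Γ.F t h ≤ Γ.F t h' := by
  unfold F
  have : Γ.β (max (t+1-h') 1) ≥ Γ.β (max (t+1-h) 1) :=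
    Γ.hdec _ _ (by omega) (by omega) (by omega)
  linarith

lemma F_eq_of_le (t h : ℕ) (hth : t ≤ h) : Γ.F t (h+1) = Γ.F t h := by
  unfold F
  congr 2
  omega

lemma F_step (t h : ℕ) (ht2 : 2 ≤ t) (hth : h + 1 ≤ t) :
    Γ.F t (h+1) = Γ.F (t-1) h + (Γ.P+Γ.p) := by
  unfold F
  have h1 : ((t-1:ℕ):ℤ) = (t:ℤ) - 1 := by
    have h1t : 1 ≤ t := by omega
    push_cast [Nat.cast_sub h1t]; ring
  have h2 : max (t+1-(h+1)) 1 = max ((t-1)+1-h) 1 := by omega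
  rw [h1, h2]; ring

lemma F_one (s : ℕ) (hs1 : 1 ≤ s) : Γ.F s 1 = ((s:ℤ)-1)*(Γ.P+Γ.p) + Γ.β s := by
  unfold F
  congr 2
  omega

lemma Fkey (t s h : ℕ) (ht1 : 1 ≤ t) (hs1 : 1 ≤ s) (hts : t + s ≤ Γ.N) (hh : 1 ≤ h) :
    Γ.F t h + Γ.F s 1 ≤ Γ.F (t+s) (h+1) := by
  have hcast : ((t+s:ℕ):ℤ) = (t:ℤ) + (s:ℤ) := by push_cast; ring
  have key : Γ.β (max (t+1-h) 1) + Γ.β s ≤ (Γ.P + Γ.p) + Γ.β (max (t+s+1-(h+1)) 1) := by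
    rcases eq_or_lt_of_le hs1 with he | hs2
    · -- s = 1
      have hidx : max (t+s+1-(h+1)) 1 = max (t+1-h) 1 := by omega
      rw [hidx, ← he, Γ.hb1]
      linarith
    · -- 2 ≤ s
      by_cases hth : t ≤ h
      · have hidx1 : max (t+1-h) 1 = 1 := by omega
        have hle : Γ.β s ≤ Γ.β (max (t+s+1-(h+1)) 1) :=
          Γ.hdec _ _ (by omega) (by omega) (by omega)
        rw [hidx1, Γ.hb1]
        linarith
      · have hidx1 : max (t+1-h) 1 = t+1-h := by omega
        have hP := Γ.hPP (t+1-h) s (by omega) (by omega) hs2 (by omega)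
        have hβ : 0 < Γ.β (max (t+s+1-(h+1)) 1) := Γ.hpos _ (by omega) (by omega)
        rw [hidx1]
        linarith [Γ.hp]
  rw [Γ.F_one s hs1]
  unfold F
  rw [hcast]
  nlinarith [key]

lemma mulQ_mono {a b : ℤ} (hab : a ≤ b) : a*Γ.Q ≤ b*Γ.Q :=
  mul_le_mul_of_nonneg_right hab Γ.hQ0.le

lemma mem_T {x : ℤ} {h : ℕ} : x ∈ Γ.T h ↔ x = 0 ∨
    (∃ t : ℕ, (1 ≤ t ∧ t ≤ Γ.N) ∧ ((t:ℤ)*Γ.Q ≤ x ∧ x ≤ (t:ℤ)*Γ.Q + Γ.F t h)) ∨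
    (Γ.c ≤ x ∧ x ≤ 2*Γ.c*h) := by
  simp only [T, Finset.mem_insert, Finset.mem_union, Finset.mem_biUnion, Finset.mem_Icc]

lemma zero_mem_T (h : ℕ) : (0:ℤ) ∈ Γ.T h := by
  rw [Γ.mem_T]; left; rfl

lemma station_le_c (t h : ℕ) (ht1 : 1 ≤ t) (htN : t ≤ Γ.N) (hh : 1 ≤ h) :
    (t:ℤ)*Γ.Q + Γ.F t h < Γ.c := by
  have h1 : (t:ℤ) ≤ (Γ.N:ℤ) := by exact_mod_cast htN
  have h2 := Γ.F_lt_Q t h ht1 htN hh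
  have h3 := Γ.mulQ_mono h1
  rw [Γ.hc]; linarith

lemma Tadd (h : ℕ) (hh : 1 ≤ h) : Γ.T h + Γ.T 1 = Γ.T (h+1) := by
  have hQ0 := Γ.hQ0
  have hc0 := Γ.hc0
  have hPp := Γ.hPp
  have hcast : ((h:ℤ)+1) = ((h+1:ℕ):ℤ) := by push_cast; ring
  have hh1 : (1:ℤ) ≤ (h:ℤ) := by exact_mod_cast hh
  have hch : Γ.c * 1 ≤ Γ.c * (h:ℤ) := mul_le_mul_of_nonneg_left hh1 Γ.hc0.le
  have h2c : 2*Γ.c = (2*(Γ.N:ℤ)+2)*Γ.Q := by rw [Γ.hc]; ring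
  have hcNQ : Γ.c = ((Γ.N:ℤ)+1)*Γ.Q := Γ.hc
  ext x
  rw [Finset.mem_add]
  constructor
  · rintro ⟨a, ha, b, hb, rfl⟩
    rw [Γ.mem_T] at ha hb
    simp only [Nat.cast_one, mul_one] at hb
    rw [Γ.mem_T]
    rcases ha with rfl | ⟨t, ⟨ht1, htN⟩, hta, htb⟩ | ⟨hca, hcb⟩
    · -- a = 0
      rcases hb with rfl | ⟨s, ⟨hs1, hsN⟩, hsa, hsb⟩ | ⟨hcc, hcd⟩
      · left; ring
      · right; left
        exact ⟨s, ⟨hs1, hsN⟩, by linarith,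
          by have := Γ.F_mono s 1 (h+1) le_rfl (by omega) hs1 hsN; linarith⟩
      · right; right
        constructor
        · linarith
        · push_cast; linarith [hch]
    · -- a in station t
      rcases hb with rfl | ⟨s, ⟨hs1, hsN⟩, hsa, hsb⟩ | ⟨hcc, hcd⟩
      · right; left
        exact ⟨t, ⟨ht1, htN⟩, by linarith,
          by have := Γ.F_mono t h (h+1) hh (by omega) ht1 htN; linarith⟩
      · -- station + station
        by_cases hts : t + s ≤ Γ.N
        · right; left
          refine ⟨t+s, ⟨by omega, hts⟩, ?_, ?_⟩
          · push_cast; nlinarith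
          · have hkey := Γ.Fkey t s h ht1 hs1 hts hh
            push_cast
            push_cast at hkey
            nlinarith
        · -- t + s > N : lands in [c, 2c(h+1)]
          right; right
          have htQ : ((Γ.N:ℤ)+1)*Γ.Q ≤ ((t:ℤ)+(s:ℤ))*Γ.Q := by
            apply Γ.mulQ_mono
            have : ((t+s:ℕ):ℤ) ≥ ((Γ.N:ℤ)+1) := by exact_mod_cast Nat.succ_le_of_lt (by omega)
            push_cast at this; linarith
          have hFt := Γ.F_lt_Q t h ht1 htN hh
          have hFs := Γ.F_lt_Q s 1 hs1 hsN le_rfl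
          have htN' : (t:ℤ) ≤ (Γ.N:ℤ) := by exact_mod_cast htN
          have hsN' : (s:ℤ) ≤ (Γ.N:ℤ) := by exact_mod_cast hsN
          have h2 : ((t:ℤ)+(s:ℤ)+2)*Γ.Q ≤ (2*(Γ.N:ℤ)+2)*Γ.Q := Γ.mulQ_mono (by linarith)
          constructor
          · rw [hcNQ]; linarith
          · push_cast
            linarith [hch, h2c]
      · -- station + [c,2c]
        right; right
        have h1 : 0 ≤ (t:ℤ)*Γ.Q := by positivity
        have h2 := Γ.station_le_c t h ht1 htN hh
        have h3 := Γ.F_nonneg t h ht1 htN hh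
        constructor
        · linarith
        · push_cast; linarith [hch]
    · -- a in [c, 2ch]
      rcases hb with rfl | ⟨s, ⟨hs1, hsN⟩, hsa, hsb⟩ | ⟨hcc, hcd⟩
      · right; right
        refine ⟨by linarith, by push_cast; linarith [hch]⟩
      · right; right
        have h1 : 0 ≤ (s:ℤ)*Γ.Q := by positivity
        have h2 := Γ.station_le_c s 1 hs1 hsN le_rfl
        have h3 := Γ.F_nonneg s 1 hs1 hsN le_rfl
        refine ⟨by linarith, by push_cast; linarith [hch]⟩
      · right; right
        refine ⟨by linarith, by push_cast; linarith [hch]⟩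
  · intro hx
    rw [Γ.mem_T] at hx
    rcases hx with rfl | ⟨t, ⟨ht1, htN⟩, hta, htb⟩ | ⟨hca, hcb⟩
    · exact ⟨0, Γ.zero_mem_T h, 0, Γ.zero_mem_T 1, by ring⟩
    · by_cases hth : t ≤ h
      · refine ⟨x, ?_, 0, Γ.zero_mem_T 1, by ring⟩
        rw [Γ.mem_T]; right; left
        exact ⟨t, ⟨ht1, htN⟩, hta, by rw [← Γ.F_eq_of_le t h hth]; linarith⟩
      · -- t ≥ h+1 ≥ 2
        have ht2 : 2 ≤ t := by omega
        have hstep := Γ.F_step t h ht2 (by omega)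
        set o : ℤ := x - (t:ℤ)*Γ.Q with ho
        set o1 : ℤ := min o (Γ.F (t-1) h) with ho1
        have hF'0 : 0 ≤ Γ.F (t-1) h := Γ.F_nonneg (t-1) h (by omega) (by omega) hh
        have ho0 : 0 ≤ o := by simp [ho]; linarith
        have h11 : 0 ≤ o1 := le_min ho0 hF'0
        have h12 : o1 ≤ Γ.F (t-1) h := min_le_right _ _
        have h13 : o - o1 ≤ Γ.P + Γ.p := by
          rcases le_or_gt o (Γ.F (t-1) h) with hcase | hcase
          · rw [ho1, min_eq_left hcase]; linarith [Γ.hPp]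
          · rw [ho1, min_eq_right hcase.le]
            have : o ≤ Γ.F t (h+1) := by simp [ho]; linarith
            linarith [hstep]
        have h14 : 0 ≤ o - o1 := by
          have := min_le_left o (Γ.F (t-1) h)
          linarith
        have hcastt : ((t-1:ℕ):ℤ) = (t:ℤ) - 1 := by
          have h1t : 1 ≤ t := by omega
          push_cast [Nat.cast_sub h1t]; ring
        refine ⟨((t-1:ℕ):ℤ)*Γ.Q + o1, ?_, (1:ℤ)*Γ.Q + (o - o1), ?_, ?_⟩
        · rw [Γ.mem_T]; right; left
          exact ⟨t-1, ⟨by omega, by omega⟩, by linarith, by linarith⟩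
        · rw [Γ.mem_T]; right; left
          refine ⟨1, ⟨le_rfl, Γ.hN⟩, by push_cast; linarith, ?_⟩
          have hF11 : Γ.F 1 1 = Γ.P + Γ.p := by
            unfold F; norm_num [Γ.hb1]
          rw [hF11]
          push_cast
          try linarith
        · rw [hcastt]; ring_nf
          try linarith [ho]
    · -- x in [c, 2c(h+1)]
      push_cast at hcb
      by_cases h1 : x ≤ 2*Γ.c*h
      · refine ⟨x, ?_, 0, Γ.zero_mem_T 1, by ring⟩
        rw [Γ.mem_T]; right; right; exact ⟨hca, h1⟩
      · by_cases h2 : x ≤ 2*Γ.c*h + Γ.c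
        · refine ⟨x - Γ.c, ?_, Γ.c, ?_, by ring⟩
          · rw [Γ.mem_T]; right; right
            constructor
            · linarith [hch]
            · linarith
          · rw [Γ.mem_T]; right; right
            refine ⟨le_rfl, by push_cast; linarith [Γ.hc0]⟩
        · refine ⟨2*Γ.c*h, ?_, x - 2*Γ.c*h, ?_, by ring⟩
          · rw [Γ.mem_T]; right; right
            refine ⟨by linarith [hch], le_rfl⟩
          · rw [Γ.mem_T]; right; right
            refine ⟨by linarith, by push_cast; linarith⟩

lemma TfinSumset : ∀ h : ℕ, 1 ≤ h → finSumset h (Γ.T 1) = Γ.T h := by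
  intro h
  induction h with
  | zero => omega
  | succ m ih =>
    intro _
    rcases Nat.eq_zero_or_pos m with he | hm
    · subst he; exact finSumset_one _
    · rw [finSumset_succ, ih hm, Γ.Tadd m hm]

lemma Tcard (h : ℕ) (hh : 1 ≤ h) :
    ((Γ.T h).card : ℤ) =
      2*Γ.c*(h:ℤ) - Γ.c + 2 + ∑ t ∈ Finset.Icc 1 Γ.N, (Γ.F t h + 1) := by
  classical
  have hQ0 := Γ.hQ0
  have hc0 := Γ.hc0
  have hh1 : (1:ℤ) ≤ (h:ℤ) := by exact_mod_cast hh
  have hch : Γ.c * 1 ≤ Γ.c * (h:ℤ) := mul_le_mul_of_nonneg_left hh1 hc0.le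
  set U := (Finset.Icc 1 Γ.N).biUnion
    (fun t => Finset.Icc ((t:ℤ)*Γ.Q) ((t:ℤ)*Γ.Q + Γ.F t h)) with hU
  set I := Finset.Icc Γ.c (2*Γ.c*(h:ℤ)) with hI
  have hUmem : ∀ x ∈ U, 0 < x ∧ x < Γ.c := by
    intro x hx
    rw [hU, Finset.mem_biUnion] at hx
    obtain ⟨t, ht, hxt⟩ := hx
    rw [Finset.mem_Icc] at ht hxt
    have h1 : (1:ℤ) ≤ (t:ℤ) := by exact_mod_cast ht.1
    have h2 := Γ.station_le_c t h ht.1 ht.2 hh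
    constructor
    · nlinarith [hxt.1]
    · linarith [hxt.2]
  have hdisj : Disjoint U I := by
    rw [Finset.disjoint_left]
    intro x hx hxI
    rw [hI, Finset.mem_Icc] at hxI
    linarith [(hUmem x hx).2, hxI.1]
  have h0 : (0:ℤ) ∉ U ∪ I := by
    rw [Finset.mem_union]
    rintro (h0U | h0I)
    · linarith [(hUmem 0 h0U).1]
    · rw [hI, Finset.mem_Icc] at h0I; linarith [h0I.1]
  have hTcard : Γ.T h = insert 0 (U ∪ I) := rfl
  rw [hTcard, Finset.card_insert_of_notMem h0, Finset.card_union_of_disjoint hdisj]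
  have hUcard : U.card = ∑ t ∈ Finset.Icc 1 Γ.N,
      (Finset.Icc ((t:ℤ)*Γ.Q) ((t:ℤ)*Γ.Q + Γ.F t h)).card := by
    rw [hU]
    apply Finset.card_biUnion
    intro t ht t' ht' hne
    rw [Finset.mem_coe, Finset.mem_Icc] at ht ht'
    have key : ∀ a b : ℕ, 1 ≤ a → a ≤ Γ.N → 1 ≤ b → b ≤ Γ.N → a < b →
        Disjoint (Finset.Icc ((a:ℤ)*Γ.Q) ((a:ℤ)*Γ.Q + Γ.F a h))
          (Finset.Icc ((b:ℤ)*Γ.Q) ((b:ℤ)*Γ.Q + Γ.F b h)) := by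
      intro a b ha1 haN hb1 hbN hab
      rw [Finset.disjoint_left]
      intro x hxa hxb
      rw [Finset.mem_Icc] at hxa hxb
      have hFa := Γ.F_lt_Q a h ha1 haN hh
      have hmul : ((a:ℤ)+1)*Γ.Q ≤ (b:ℤ)*Γ.Q := by
        apply Γ.mulQ_mono
        have : (a:ℤ) + 1 ≤ (b:ℤ) := by exact_mod_cast hab
        linarith
      linarith [hxa.2, hxb.1]
    rcases Nat.lt_or_ge t t' with hlt | hge
    · exact key t t' ht.1 ht.2 ht'.1 ht'.2 hlt
    · have hlt : t' < t := by omega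
      exact (key t' t ht'.1 ht'.2 ht.1 ht.2 hlt).symm
  have hstation : ∀ t ∈ Finset.Icc 1 Γ.N,
      (((Finset.Icc ((t:ℤ)*Γ.Q) ((t:ℤ)*Γ.Q + Γ.F t h)).card : ℤ)) = Γ.F t h + 1 := by
    intro t ht
    rw [Finset.mem_Icc] at ht
    have hF0 := Γ.F_nonneg t h ht.1 ht.2 hh
    rw [Int.card_Icc]
    have e : (t:ℤ)*Γ.Q + Γ.F t h + 1 - (t:ℤ)*Γ.Q = Γ.F t h + 1 := by ring
    rw [e, Int.toNat_of_nonneg (by linarith)]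
  have hIcard : ((I.card : ℤ)) = 2*Γ.c*(h:ℤ) - Γ.c + 1 := by
    rw [hI, Int.card_Icc, Int.toNat_of_nonneg (by linarith)]
    ring
  push_cast
  rw [hUcard]
  push_cast
  rw [Finset.sum_congr rfl hstation]
  push_cast at hIcard
  linarith [hIcard]

end Ctx

section Concrete

variable (n H : ℕ) (u : ℕ → ℕ → ℕ) (uinf : ℕ → ℕ)

def rho (v : ℕ → ℕ) (i : ℕ) : ℕ :=
  ((Finset.Icc 1 n).filter (fun k => v k ≤ v i)).card

def S0 : ℤ := ∑ t ∈ Finset.Icc 1 (H+1), ((t:ℤ) - 1)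

def Wc : ℤ := (S0 H + (H:ℤ) + 1)*(n:ℤ)

def Kc : ℤ := Wc n H + (n:ℤ) + 1

def bB : ℤ := Kc n H * (2*(H:ℤ)+1) + Wc n H

def Pc : ℤ := 2*(bB n H) + 1

def Qc : ℤ := ((H:ℤ)+1)*(Pc n H + (n:ℤ)) + 1

def cC : ℤ := ((H:ℤ)+2)*(Qc n H)

def pp (i : ℕ) : ℤ := (rho n uinf i : ℤ)

def Bf (i h : ℕ) : ℤ :=
  if 1 ≤ h ∧ h ≤ H then
    (rho n (u h) i : ℤ) + (Kc n H)*(((H:ℤ)+1)^2 - (h:ℤ)^2) - (S0 H + (h:ℤ))*(pp n uinf i)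
  else 0

def βf (i j : ℕ) : ℤ :=
  if j ≤ 1 then Pc n H + pp n uinf i
  else Bf n H u uinf i (H+2-j) - Bf n H u uinf i (H+3-j)

lemma rho_pos (v : ℕ → ℕ) (i : ℕ) (hi1 : 1 ≤ i) (hi2 : i ≤ n) : 1 ≤ rho n v i := by
  have : i ∈ (Finset.Icc 1 n).filter (fun k => v k ≤ v i) := by
    rw [Finset.mem_filter, Finset.mem_Icc]; exact ⟨⟨hi1, hi2⟩, le_rfl⟩
  exact Finset.card_pos.mpr ⟨i, this⟩

lemma rho_le_n (v : ℕ → ℕ) (i : ℕ) : rho n v i ≤ n := by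
  calc ((Finset.Icc 1 n).filter (fun k => v k ≤ v i)).card
      ≤ (Finset.Icc 1 n).card := Finset.card_le_card (Finset.filter_subset _ _)
    _ = n := by rw [Nat.card_Icc]; omega

lemma rho_le_iff (v : ℕ → ℕ) {i j : ℕ} (hi1 : 1 ≤ i) (hi2 : i ≤ n)
    (hj1 : 1 ≤ j) (hj2 : j ≤ n) :
    rho n v i ≤ rho n v j ↔ v i ≤ v j := by
  constructor
  · intro hle
    by_contra hvu
    push_neg at hvu
    have hsub : (Finset.Icc 1 n).filter (fun k => v k ≤ v j) ⊆
        (Finset.Icc 1 n).filter (fun k => v k ≤ v i) := by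
      intro k hk
      rw [Finset.mem_filter] at hk ⊢
      exact ⟨hk.1, le_trans hk.2 hvu.le⟩
    have hss : (Finset.Icc 1 n).filter (fun k => v k ≤ v j) ⊂
        (Finset.Icc 1 n).filter (fun k => v k ≤ v i) := by
      rw [Finset.ssubset_iff_of_subset hsub]
      refine ⟨i, ?_, ?_⟩
      · rw [Finset.mem_filter, Finset.mem_Icc]; exact ⟨⟨hi1, hi2⟩, le_rfl⟩
      · rw [Finset.mem_filter]
        rintro ⟨-, hc⟩
        omega
    have := Finset.card_lt_card hss
    unfold rho at hle
    omega
  · intro hv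
    apply Finset.card_le_card
    intro k hk
    rw [Finset.mem_filter] at hk ⊢
    exact ⟨hk.1, le_trans hk.2 hv⟩

lemma S0_nonneg : 0 ≤ S0 H := by
  apply Finset.sum_nonneg
  intro t ht
  rw [Finset.mem_Icc] at ht
  have : (1:ℤ) ≤ (t:ℤ) := by exact_mod_cast ht.1
  linarith

lemma Wc_pos (hn : 2 ≤ n) (hH : 2 ≤ H) : 0 < Wc n H := by
  have h1 := S0_nonneg H
  have h2 : (2:ℤ) ≤ (n:ℤ) := by exact_mod_cast hn
  have h3 : (2:ℤ) ≤ (H:ℤ) := by exact_mod_cast hH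
  unfold Wc; nlinarith

lemma Kc_pos (hn : 2 ≤ n) (hH : 2 ≤ H) : 0 < Kc n H := by
  have := Wc_pos n H hn hH
  have h2 : (2:ℤ) ≤ (n:ℤ) := by exact_mod_cast hn
  unfold Kc; linarith

lemma bB_pos (hn : 2 ≤ n) (hH : 2 ≤ H) : 0 < bB n H := by
  have h1 := Wc_pos n H hn hH
  have h2 := Kc_pos n H hn hH
  have h3 : (2:ℤ) ≤ (H:ℤ) := by exact_mod_cast hH
  unfold bB; nlinarith

lemma Pc_pos (hn : 2 ≤ n) (hH : 2 ≤ H) : 0 < Pc n H := by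
  have := bB_pos n H hn hH
  unfold Pc; linarith

lemma pp_bounds (i : ℕ) (hi : 1 ≤ i ∧ i ≤ n) : 1 ≤ pp n uinf i ∧ pp n uinf i ≤ (n:ℤ) := by
  unfold pp
  constructor
  · exact_mod_cast rho_pos n uinf i hi.1 hi.2
  · exact_mod_cast rho_le_n n uinf i

lemma Bf_val (i : ℕ) (h : ℕ) (h1 : 1 ≤ h) (h2 : h ≤ H) :
    Bf n H u uinf i h =
      (rho n (u h) i : ℤ) + (Kc n H)*(((H:ℤ)+1)^2 - (h:ℤ)^2) - (S0 H + (h:ℤ))*(pp n uinf i) := by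
  unfold Bf; rw [if_pos ⟨h1, h2⟩]

lemma Bf_zero (i : ℕ) (h : ℕ) (h2 : H < h) : Bf n H u uinf i h = 0 := by
  unfold Bf; rw [if_neg (by omega)]

lemma beta_near (hn : 2 ≤ n) (hH : 2 ≤ H) (i : ℕ) (hi : 1 ≤ i ∧ i ≤ n)
    (m : ℕ) (hm2 : 2 ≤ m) (hmN : m ≤ H+1) :
    Kc n H * (2*((H:ℤ)+2-(m:ℤ))+1) - Wc n H ≤ βf n H u uinf i m ∧
    βf n H u uinf i m ≤ Kc n H * (2*((H:ℤ)+2-(m:ℤ))+1) + Wc n H := by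
  have hS0 := S0_nonneg H
  have hK := Kc_pos n H hn hH
  have hppb := pp_bounds n uinf i hi
  have hn2 : (2:ℤ) ≤ (n:ℤ) := by exact_mod_cast hn
  have hH2 : (2:ℤ) ≤ (H:ℤ) := by exact_mod_cast hH
  have hrb1 : (1:ℤ) ≤ (rho n (u (H+2-m)) i : ℤ) := by
    exact_mod_cast rho_pos n (u (H+2-m)) i hi.1 hi.2
  have hrb2 : ((rho n (u (H+2-m)) i : ℤ)) ≤ (n:ℤ) := by
    exact_mod_cast rho_le_n n (u (H+2-m)) i
  rcases eq_or_lt_of_le hm2 with he | hm3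
  · -- m = 2
    have hm : m = 2 := he.symm
    subst hm
    have e1 : H+2-2 = H := by omega
    have e2 : H+3-2 = H+1 := by omega
    have hβ : βf n H u uinf i 2 = Bf n H u uinf i H - Bf n H u uinf i (H+1) := by
      unfold βf; rw [if_neg (by omega), e1, e2]
    rw [hβ, Bf_zero n H u uinf i (H+1) (by omega),
        Bf_val n H u uinf i H (by omega) le_rfl]
    rw [e1] at hrb1 hrb2
    unfold Wc
    constructor
    · push_cast; nlinarith [hppb.2, hppb.1]
    · push_cast; nlinarith [hppb.1, hppb.2]
  · -- 3 ≤ m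
    have h1 : 1 ≤ H+2-m := by omega
    have h2 : H+2-m ≤ H := by omega
    have h3 : 2 ≤ H+3-m := by omega
    have h4 : H+3-m ≤ H := by omega
    have hβ : βf n H u uinf i m = Bf n H u uinf i (H+2-m) - Bf n H u uinf i (H+3-m) := by
      unfold βf; rw [if_neg (by omega)]
    have hrc1 : (1:ℤ) ≤ (rho n (u (H+3-m)) i : ℤ) := by
      exact_mod_cast rho_pos n (u (H+3-m)) i hi.1 hi.2
    have hrc2 : ((rho n (u (H+3-m)) i : ℤ)) ≤ (n:ℤ) := by
      exact_mod_cast rho_le_n n (u (H+3-m)) i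
    rw [hβ, Bf_val n H u uinf i (H+2-m) h1 h2, Bf_val n H u uinf i (H+3-m) (by omega) h4]
    have ec1 : ((H+2-m:ℕ):ℤ) = (H:ℤ)+2-(m:ℤ) := by
      have : m ≤ H+2 := by omega
      push_cast [Nat.cast_sub this]; ring
    have ec2 : ((H+3-m:ℕ):ℤ) = (H:ℤ)+3-(m:ℤ) := by
      have : m ≤ H+3 := by omega
      push_cast [Nat.cast_sub this]; ring
    rw [ec1, ec2]
    have hKexp : ((rho n (u (H+2-m)) i :ℤ) + Kc n H*(((H:ℤ)+1)^2 - ((H:ℤ)+2-(m:ℤ))^2)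
          - (S0 H + ((H:ℤ)+2-(m:ℤ)))*(pp n uinf i))
        - ((rho n (u (H+3-m)) i :ℤ) + Kc n H*(((H:ℤ)+1)^2 - ((H:ℤ)+3-(m:ℤ))^2)
          - (S0 H + ((H:ℤ)+3-(m:ℤ)))*(pp n uinf i))
        = (rho n (u (H+2-m)) i :ℤ) - (rho n (u (H+3-m)) i :ℤ)
          + Kc n H*(2*((H:ℤ)+2-(m:ℤ))+1) + pp n uinf i := by ring
    rw [hKexp]
    have hW3 : 3*(n:ℤ) ≤ (S0 H + (H:ℤ) + 1)*(n:ℤ) := by nlinarith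
    unfold Wc
    constructor
    · linarith [hppb.1, hppb.2]
    · linarith [hppb.1, hppb.2]

lemma coeff_mono (H : ℕ) {j k : ℕ} (hj : 2 ≤ j) (hjk : j ≤ k) (hk : k ≤ H+1) :
    2*((H:ℤ)+2-(k:ℤ))+1 ≤ 2*((H:ℤ)+2-(j:ℤ))+1 ∧ (3:ℤ) ≤ 2*((H:ℤ)+2-(k:ℤ))+1 ∧
    2*((H:ℤ)+2-(j:ℤ))+1 ≤ 2*(H:ℤ)+1 := by
  have h1 : (j:ℤ) ≤ (k:ℤ) := by exact_mod_cast hjk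
  have h2 : (k:ℤ) ≤ (H:ℤ)+1 := by exact_mod_cast hk
  have h3 : (2:ℤ) ≤ (j:ℤ) := by exact_mod_cast hj
  refine ⟨by linarith, by linarith, by linarith⟩

lemma beta_le_bB (n H : ℕ) (u : ℕ → ℕ → ℕ) (uinf : ℕ → ℕ)
    (hn : 2 ≤ n) (hH : 2 ≤ H) (i : ℕ) (hi : 1 ≤ i ∧ i ≤ n)
    (m : ℕ) (hm2 : 2 ≤ m) (hmN : m ≤ H+1) :
    βf n H u uinf i m ≤ bB n H := by
  have hnear := (beta_near n H u uinf hn hH i hi m hm2 hmN).2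
  have hK := Kc_pos n H hn hH
  have hco := coeff_mono H hm2 le_rfl hmN
  have : Kc n H * (2*((H:ℤ)+2-(m:ℤ))+1) ≤ Kc n H * (2*(H:ℤ)+1) :=
    mul_le_mul_of_nonneg_left (by linarith [hco.2.2]) hK.le
  unfold bB
  linarith

def mkCtx (n H : ℕ) (u : ℕ → ℕ → ℕ) (uinf : ℕ → ℕ)
    (hn : 2 ≤ n) (hH : 2 ≤ H) (i : ℕ) (hi : 1 ≤ i ∧ i ≤ n) : Ctx where
  N := H+1
  P := Pc n H
  p := pp n uinf i
  Q := Qc n H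
  c := cC n H
  β := βf n H u uinf i
  hN := by omega
  hp := by linarith [(pp_bounds n uinf i hi).1]
  hP0 := Pc_pos n H hn hH
  hb1 := by unfold βf; rw [if_pos (by omega)]
  hdec := by
    intro j k hj1 hjk hkN
    rcases eq_or_lt_of_le hjk with he | hlt
    · subst he; exact le_rfl
    · rcases eq_or_lt_of_le hj1 with he1 | hj2
      · -- j = 1
        have hj : j = 1 := he1.symm
        subst hj
        have hb1 : βf n H u uinf i 1 = Pc n H + pp n uinf i := by
          unfold βf; rw [if_pos (by omega)]
        have hk2 : 2 ≤ k := by omega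
        have := beta_le_bB n H u uinf hn hH i hi k hk2 hkN
        have hpb := (pp_bounds n uinf i hi).1
        have hbB := bB_pos n H hn hH
        rw [hb1]
        unfold Pc at *
        linarith
      · -- 2 ≤ j < k
        have hj2' : 2 ≤ j := by omega
        have hnj := (beta_near n H u uinf hn hH i hi j hj2' (by omega)).1
        have hnk := (beta_near n H u uinf hn hH i hi k (by omega) hkN).2
        have hK := Kc_pos n H hn hH
        have hjk' : (j:ℤ) + 1 ≤ (k:ℤ) := by exact_mod_cast hlt
        have hmul : Kc n H * ((2*((H:ℤ)+2-(k:ℤ))+1) + 2) ≤ Kc n H * (2*((H:ℤ)+2-(j:ℤ))+1) :=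
          mul_le_mul_of_nonneg_left (by linarith) hK.le
        have hKW : Wc n H ≤ Kc n H := by
          have h2 : (2:ℤ) ≤ (n:ℤ) := by exact_mod_cast hn
          unfold Kc; linarith
        nlinarith [hmul]
  hpos := by
    intro j hj1 hjN
    rcases eq_or_lt_of_le hj1 with he1 | hj2
    · have hj : j = 1 := he1.symm
      subst hj
      have hb1 : βf n H u uinf i 1 = Pc n H + pp n uinf i := by
        unfold βf; rw [if_pos (by omega)]
      rw [hb1]
      linarith [(pp_bounds n uinf i hi).1, Pc_pos n H hn hH]
    · have hj2' : 2 ≤ j := by omega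
      have hnj := (beta_near n H u uinf hn hH i hi j hj2' hjN).1
      have hK := Kc_pos n H hn hH
      have hco := coeff_mono H hj2' le_rfl hjN
      have hmul : Kc n H * 3 ≤ Kc n H * (2*((H:ℤ)+2-(j:ℤ))+1) :=
        mul_le_mul_of_nonneg_left (by linarith [hco.2.1]) hK.le
      have hKW : Wc n H ≤ Kc n H := by
        have h2 : (2:ℤ) ≤ (n:ℤ) := by exact_mod_cast hn
        unfold Kc; linarith
      linarith
  hPP := by
    intro j k hj2 hjN hk2 hkN
    have h1 := beta_le_bB n H u uinf hn hH i hi j hj2 hjN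
    have h2 := beta_le_bB n H u uinf hn hH i hi k hk2 hkN
    unfold Pc
    linarith
  hQ := by
    have hpb := (pp_bounds n uinf i hi).2
    have hH0 : (0:ℤ) ≤ (H:ℤ)+1 := by positivity
    have : ((H:ℤ)+1)*(Pc n H + pp n uinf i) ≤ ((H:ℤ)+1)*(Pc n H + (n:ℤ)) :=
      mul_le_mul_of_nonneg_left (by linarith) hH0
    unfold Qc
    push_cast
    linarith
  hc := by
    unfold cC
    push_cast
    ring

lemma sum_beta (n H : ℕ) (u : ℕ → ℕ → ℕ) (uinf : ℕ → ℕ) (i h : ℕ) (hh : 1 ≤ h) :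
    ∑ t ∈ Finset.Icc 1 (H+1), βf n H u uinf i (max (t+1-h) 1)
      = ((min h (H+1) : ℕ):ℤ)*(Pc n H + pp n uinf i) + Bf n H u uinf i h := by
  classical
  set m := min h (H+1) with hm
  have hm1 : 1 ≤ m := by omega
  have hmH : m ≤ H+1 := by omega
  have hsplit : Finset.Icc 1 (H+1) = Finset.Icc 1 m ∪ Finset.Icc (m+1) (H+1) := by
    ext t; simp only [Finset.mem_Icc, Finset.mem_union]; omega
  have hdisj : Disjoint (Finset.Icc 1 m) (Finset.Icc (m+1) (H+1)) := by
    rw [Finset.disjoint_left]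
    intro t ht ht'
    rw [Finset.mem_Icc] at ht ht'
    omega
  rw [hsplit, Finset.sum_union hdisj]
  have hfirst : ∑ t ∈ Finset.Icc 1 m, βf n H u uinf i (max (t+1-h) 1)
      = ((m:ℕ):ℤ)*(Pc n H + pp n uinf i) := by
    have hcongr : ∀ t ∈ Finset.Icc 1 m, βf n H u uinf i (max (t+1-h) 1)
        = Pc n H + pp n uinf i := by
      intro t ht
      rw [Finset.mem_Icc] at ht
      have e : max (t+1-h) 1 = 1 := by omega
      rw [e]
      unfold βf; rw [if_pos (by omega)]
    rw [Finset.sum_congr rfl hcongr, Finset.sum_const, Nat.card_Icc]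
    simp only [Nat.add_sub_cancel, nsmul_eq_mul]
  rw [hfirst]
  rcases Nat.lt_or_ge H h with hcase | hcase
  · -- h ≥ H+1 : second part empty, Bf = 0
    have hmH1 : m = H+1 := by omega
    have hempty : Finset.Icc (m+1) (H+1) = ∅ := by
      rw [Finset.Icc_eq_empty_iff]; omega
    rw [hempty, Finset.sum_empty, Bf_zero n H u uinf i h hcase]
  · -- h ≤ H
    have hmh : m = h := by omega
    rw [hmh]
    have hIco : Finset.Icc (h+1) (H+1) = Finset.Ico (h+1) (H+2) := by
      rw [show H+2 = (H+1)+1 from rfl, Finset.Ico_add_one_right_eq_Icc]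
    rw [hIco, Finset.sum_Ico_eq_sum_range]
    have hrange : H+2-(h+1) = H+1-h := by omega
    rw [hrange]
    have hcongr2 : ∀ k ∈ Finset.range (H+1-h),
        βf n H u uinf i (max ((h+1+k)+1-h) 1)
          = (fun j => Bf n H u uinf i (H+1-j)) (k+1)
            - (fun j => Bf n H u uinf i (H+1-j)) k := by
      intro k hk
      rw [Finset.mem_range] at hk
      have e : max ((h+1+k)+1-h) 1 = k+2 := by omega
      rw [e]
      unfold βf
      rw [if_neg (by omega)]
      have e1 : H+2-(k+2) = H+1-(k+1) := by omega
      have e2 : H+3-(k+2) = H+1-k := by omega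
      rw [e1, e2]
      try ring
    rw [Finset.sum_congr rfl hcongr2, Finset.sum_range_sub (fun j => Bf n H u uinf i (H+1-j))]
    have e3 : H+1-(H+1-h) = h := by omega
    have e4 : H+1-0 = H+1 := by omega
    simp only [e3, e4]
    rw [Bf_zero n H u uinf i (H+1) (by omega)]
    try ring

lemma card_formula (n H : ℕ) (u : ℕ → ℕ → ℕ) (uinf : ℕ → ℕ)
    (hn : 2 ≤ n) (hH : 2 ≤ H) (i : ℕ) (hi : 1 ≤ i ∧ i ≤ n) (h : ℕ) (hh : 1 ≤ h) :
    ((finSumset h ((mkCtx n H u uinf hn hH i hi).T 1)).card : ℤ)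
      = 2*(cC n H)*(h:ℤ) - cC n H + 2 + ((H:ℤ)+1)
        + (S0 H)*(Pc n H + pp n uinf i)
        + ((min h (H+1) : ℕ):ℤ)*(Pc n H + pp n uinf i) + Bf n H u uinf i h := by
  set Γ := mkCtx n H u uinf hn hH i hi with hΓ
  rw [Γ.TfinSumset h hh, Γ.Tcard h hh]
  have hNe : Finset.Icc 1 Γ.N = Finset.Icc 1 (H+1) := rfl
  have hce : Γ.c = cC n H := rfl
  rw [hNe, hce]
  have hFr : ∀ t ∈ Finset.Icc 1 (H+1), Γ.F t h + 1
      = (((t:ℤ)-1)*(Pc n H + pp n uinf i) + βf n H u uinf i (max (t+1-h) 1)) + 1 :=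
    fun t _ => rfl
  rw [Finset.sum_congr rfl hFr]
  rw [Finset.sum_add_distrib, Finset.sum_add_distrib]
  rw [← Finset.sum_mul]
  rw [sum_beta n H u uinf i h hh]
  rw [Finset.sum_const, Nat.card_Icc]
  have : S0 H = ∑ t ∈ Finset.Icc 1 (H+1), ((t:ℤ) - 1) := rfl
  rw [← this]
  simp only [Nat.add_sub_cancel, nsmul_eq_mul, mul_one]
  push_cast
  ring

lemma card_compare_low (n H : ℕ) (u : ℕ → ℕ → ℕ) (uinf : ℕ → ℕ)
    (hn : 2 ≤ n) (hH : 2 ≤ H) (i : ℕ) (hi : 1 ≤ i ∧ i ≤ n) (j : ℕ) (hj : 1 ≤ j ∧ j ≤ n)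
    (h : ℕ) (hh1 : 1 ≤ h) (hhH : h ≤ H) :
    ((finSumset h ((mkCtx n H u uinf hn hH i hi).T 1)).card ≤
      (finSumset h ((mkCtx n H u uinf hn hH j hj).T 1)).card ↔ u h i ≤ u h j) := by
  rw [← Nat.cast_le (α := ℤ)]
  rw [card_formula n H u uinf hn hH i hi h hh1, card_formula n H u uinf hn hH j hj h hh1]
  rw [Bf_val n H u uinf i h hh1 hhH, Bf_val n H u uinf j h hh1 hhH]
  have hmin : min h (H+1) = h := by omega
  rw [hmin]
  rw [← rho_le_iff n (u h) hi.1 hi.2 hj.1 hj.2]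
  rw [← Nat.cast_le (α := ℤ)]
  unfold pp
  constructor
  · intro hle; linarith
  · intro hle; linarith

lemma card_compare_high (n H : ℕ) (u : ℕ → ℕ → ℕ) (uinf : ℕ → ℕ)
    (hn : 2 ≤ n) (hH : 2 ≤ H) (i : ℕ) (hi : 1 ≤ i ∧ i ≤ n) (j : ℕ) (hj : 1 ≤ j ∧ j ≤ n)
    (h : ℕ) (hhH : H < h) :
    ((finSumset h ((mkCtx n H u uinf hn hH i hi).T 1)).card ≤
      (finSumset h ((mkCtx n H u uinf hn hH j hj).T 1)).card ↔ uinf i ≤ uinf j) := by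
  have hh1 : 1 ≤ h := by omega
  rw [← Nat.cast_le (α := ℤ)]
  rw [card_formula n H u uinf hn hH i hi h hh1, card_formula n H u uinf hn hH j hj h hh1]
  rw [Bf_zero n H u uinf i h hhH, Bf_zero n H u uinf j h hhH]
  have hmin : min h (H+1) = H+1 := by omega
  rw [hmin]
  rw [← rho_le_iff n uinf hi.1 hi.2 hj.1 hj.2]
  rw [← Nat.cast_le (α := ℤ)]
  unfold pp
  have hS0 := S0_nonneg H
  have hfac : (0:ℤ) < S0 H + ((H+1:ℕ):ℤ) := by push_cast; linarith
  constructor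
  · intro hle
    by_contra hcon
    push_neg at hcon
    have h1 : (rho n uinf j : ℤ) + 1 ≤ (rho n uinf i : ℤ) := by exact_mod_cast hcon
    nlinarith
  · intro hle
    nlinarith

end Concrete



/-- (Kravitz) For all integers `n ≥ 2` and `H ≥ 2` and all `n`-tuples
`u 1, …, u H, uinf` of positive integers, there exist finite subsets `A 1, …, A n` of
the integers such that for every `h ∈ {1,…,H}` and all `i, j ∈ {1,…,n}`,
`|hAᵢ| ≤ |hAⱼ| ↔ (u h) i ≤ (u h) j`, and for every integer `h > H` and all
`i, j ∈ {1,…,n}`, `|hAᵢ| ≤ |hAⱼ| ↔ uinf i ≤ uinf j`. -/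
theorem kravitz (n H : ℕ) (hn : 2 ≤ n) (hH : 2 ≤ H)
    (u : ℕ → ℕ → ℕ) (uinf : ℕ → ℕ)
    (hu : ∀ h, 1 ≤ h → h ≤ H → ∀ i, 1 ≤ i → i ≤ n → 0 < u h i)
    (huinf : ∀ i, 1 ≤ i → i ≤ n → 0 < uinf i) :
    ∃ A : ℕ → Finset ℤ,
      (∀ h, 1 ≤ h → h ≤ H → ∀ i, 1 ≤ i → i ≤ n → ∀ j, 1 ≤ j → j ≤ n →
        ((finSumset h (A i)).card ≤ (finSumset h (A j)).card ↔ u h i ≤ u h j)) ∧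
      (∀ h, H < h → ∀ i, 1 ≤ i → i ≤ n → ∀ j, 1 ≤ j → j ≤ n →
        ((finSumset h (A i)).card ≤ (finSumset h (A j)).card ↔ uinf i ≤ uinf j)) := by
  refine ⟨fun i => if hvi : 1 ≤ i ∧ i ≤ n then (mkCtx n H u uinf hn hH i hvi).T 1 else ∅,
    ?_, ?_⟩
  · intro h hh1 hhH i hi1 hi2 j hj1 hj2
    dsimp only
    rw [dif_pos (show 1 ≤ i ∧ i ≤ n from ⟨hi1, hi2⟩),
        dif_pos (show 1 ≤ j ∧ j ≤ n from ⟨hj1, hj2⟩)]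
    exact card_compare_low n H u uinf hn hH i ⟨hi1, hi2⟩ j ⟨hj1, hj2⟩ h hh1 hhH
  · intro h hhH i hi1 hi2 j hj1 hj2
    dsimp only
    rw [dif_pos (show 1 ≤ i ∧ i ≤ n from ⟨hi1, hi2⟩),
        dif_pos (show 1 ≤ j ∧ j ≤ n from ⟨hj1, hj2⟩)]
    exact card_compare_high n H u uinf hn hH i ⟨hi1, hi2⟩ j ⟨hj1, hj2⟩ h hhH
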